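/- For each a ∈ [1/2, 1], the probability measure ν_a on I = [1/2,1] ∪ {∞} given by density dν_a/dx = 1/(2x²) on (1/2, a) and atom ν_a({∞}) = 1/(2a) satisfies the frozen percolation RDE: if Y₁, Y₂ are i.i.d. with law ν_a, independent of U ~ Uniform[0,1], then Φ(Y₁ ∧ Y₂; U) has law ν_a, where Φ(x;u) = x if x > u and Φ(x;u) = ∞ otherwise. -/

import Mathlib

open MeasureTheory ENNReal

/-- The frozen percolation map `Φ(x;u) = x` if `x > u`, `∞` otherwise, with the
state space `[1/2,1] ∪ {∞}` embedded in `ℝ≥0∞`. -/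
noncomputable def frozenPhi (x : ℝ≥0∞) (u : ℝ) : ℝ≥0∞ :=
  if ENNReal.ofReal u < x then x else ⊤

/-- The measure `ν_a` on `[1/2,1] ∪ {∞} ⊆ ℝ≥0∞`: density `1/(2x²)` on `(1/2,a)`
and an atom of mass `1/(2a)` at `∞`. -/
noncomputable def nuA (a : ℝ) : Measure ℝ≥0∞ :=
  Measure.map ENNReal.ofReal
      ((volume.restrict (Set.Ioo (1/2 : ℝ) a)).withDensity
        (fun x => ENNReal.ofReal (1/(2*x^2)))) +
    ENNReal.ofReal (1/(2*a)) • Measure.dirac ⊤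

open Set

noncomputable def w (x : ℝ) : ℝ≥0∞ := ENNReal.ofReal (1/(2*x^2))
lemma w_meas : Measurable w := by unfold w; fun_prop
lemma frozen_meas : Measurable (fun p : ℝ≥0∞ × ℝ≥0∞ × ℝ => frozenPhi (min p.1 p.2.1) p.2.2) := by
  unfold frozenPhi
  refine Measurable.ite ?_ ?_ measurable_const
  · exact measurableSet_lt (ENNReal.measurable_ofReal.comp (measurable_snd.comp measurable_snd))
      (measurable_fst.min (measurable_fst.comp measurable_snd))
  · exact measurable_fst.min (measurable_fst.comp measurable_snd)
lemma lint_Ioo {p q : ℝ} (hp : 0 < p) (hpq : p ≤ q) :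
    ∫⁻ x in Set.Ioo p q, w x = ENNReal.ofReal (1/(2*p) - 1/(2*q)) := by
  have hcont : ContinuousOn (fun x : ℝ => 1/(2*x^2)) (Set.Icc p q) := by
    apply ContinuousOn.div continuousOn_const (by fun_prop)
    intro x hx
    have : 0 < x := lt_of_lt_of_le hp hx.1
    positivity
  have hint : IntegrableOn (fun x : ℝ => 1/(2*x^2)) (Set.Ioo p q) := by
    exact (hcont.integrableOn_Icc).mono_set Set.Ioo_subset_Icc_self
  rw [show w = fun x => ENNReal.ofReal (1/(2*x^2)) from rfl]
  rw [← ofReal_integral_eq_lintegral_ofReal hint]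
  · congr 1
    have h1 : ∫ x in Set.Ioo p q, 1/(2*x^2) = ∫ x in p..q, 1/(2*x^2) := by
      rw [intervalIntegral.integral_of_le hpq, ← MeasureTheory.integral_Ioc_eq_integral_Ioo]
    rw [h1]
    have h2 : ∀ x ∈ Set.uIcc p q, 1/(2*x^2) = (x : ℝ) ^ (-2 : ℤ) * (1/2) := by
      intro x hx
      rw [Set.uIcc_of_le hpq] at hx
      have hx0 : x ≠ 0 := (lt_of_lt_of_le hp hx.1).ne'
      rw [show (x:ℝ)^(-2:ℤ) = (x^2)⁻¹ by rw [zpow_neg]; norm_cast]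
      field_simp
    rw [intervalIntegral.integral_congr h2, intervalIntegral.integral_mul_const,
      integral_zpow (Or.inr ⟨by norm_num, by
        rw [Set.uIcc_of_le hpq]; intro h; exact absurd h.1 (not_le.mpr hp)⟩)]
    have hq0 : (0:ℝ) < q := lt_of_lt_of_le hp hpq
    simp only [zpow_neg, zpow_one, Int.reduceNeg, Int.reduceAdd]
    norm_num
    field_simp
    ring
  · filter_upwards [self_mem_ae_restrict measurableSet_Ioo] with x hx
    have : 0 < x := lt_trans hp hx.1
    positivity

lemma lint_nu (a : ℝ) {f : ℝ≥0∞ → ℝ≥0∞} (hf : Measurable f) :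
    ∫⁻ y, f y ∂(nuA a) =
      (∫⁻ x in Set.Ioo (1/2 : ℝ) a, w x * f (ENNReal.ofReal x)) +
        ENNReal.ofReal (1/(2*a)) * f ⊤ := by
  unfold nuA
  have hw : (fun x : ℝ => ENNReal.ofReal (1/(2*x^2))) = w := rfl
  rw [lintegral_add_measure, lintegral_smul_measure, lintegral_dirac,
    lintegral_map hf ENNReal.measurable_ofReal, hw,
    lintegral_withDensity_eq_lintegral_mul _ w_meas
      (show Measurable fun x : ℝ => f (ENNReal.ofReal x) from hf.comp ENNReal.measurable_ofReal)]
  rfl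

lemma nu_univ {a : ℝ} (ha1 : 1/2 ≤ a) : nuA a Set.univ = 1 := by
  have h : ∫⁻ y, (1 : ℝ≥0∞) ∂(nuA a) = nuA a Set.univ := lintegral_one
  rw [← h, lint_nu a measurable_const]
  simp only [mul_one]
  rw [lint_Ioo (by norm_num) ha1]
  have h2a : (0:ℝ) < 2*a := by linarith
  have h1 : (0:ℝ) ≤ 1/(2*(1/2:ℝ)) - 1/(2*a) := by
    have : 1/(2*a) ≤ 1 := by rw [div_le_one h2a]; linarith
    linarith
  rw [← ENNReal.ofReal_add h1 (by positivity),
    show (1/(2*(1/2:ℝ)) - 1/(2*a)) + 1/(2*a) = 1 by ring_nf, ENNReal.ofReal_one]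

lemma nu_prob {a : ℝ} (ha1 : 1/2 ≤ a) : IsProbabilityMeasure (nuA a) := ⟨nu_univ ha1⟩

noncomputable def Gf (t : ℝ≥0∞) (m : ℝ≥0∞) : ℝ≥0∞ :=
  if m ≤ t then (volume.restrict (Set.Icc (0:ℝ) 1)) {u | ENNReal.ofReal u < m} else 0

lemma Gf_meas (t : ℝ≥0∞) : Measurable (Gf t) := by
  have hmono : Monotone (fun m : ℝ≥0∞ => (volume.restrict (Set.Icc (0:ℝ) 1)) {u | ENNReal.ofReal u < m}) := by
    intro m m' h
    exact measure_mono (fun u hu => lt_of_lt_of_le hu h)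
  have : Gf t = (Set.Iic t).indicator
      (fun m : ℝ≥0∞ => (volume.restrict (Set.Icc (0:ℝ) 1)) {u | ENNReal.ofReal u < m}) := by
    funext m
    simp [Gf, Set.indicator_apply, Set.mem_Iic]
  rw [this]
  exact hmono.measurable.indicator measurableSet_Iic

lemma Gf_top {t : ℝ≥0∞} (ht : t ≠ ⊤) : Gf t ⊤ = 0 := by
  simp [Gf, top_le_iff, ht]

lemma Gf_ofReal {t : ℝ≥0∞} (ht : t ≠ ⊤) {x : ℝ} (hx0 : 0 < x) (hx1 : x ≤ 1) :
    Gf t (ENNReal.ofReal x) = if x ≤ t.toReal then ENNReal.ofReal x else 0 := by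
  have hset : {u : ℝ | ENNReal.ofReal u < ENNReal.ofReal x} = Set.Iio x := by
    ext u; exact ENNReal.ofReal_lt_ofReal_iff hx0
  have hmeas : (volume.restrict (Set.Icc (0:ℝ) 1)) {u | ENNReal.ofReal u < ENNReal.ofReal x}
      = ENNReal.ofReal x := by
    rw [hset, Measure.restrict_apply measurableSet_Iio]
    have : Set.Iio x ∩ Set.Icc (0:ℝ) 1 = Set.Ico 0 x := by
      ext u
      constructor
      · rintro ⟨h1, h2, _⟩; exact ⟨h2, h1⟩
      · rintro ⟨h1, h2⟩; exact ⟨h2, h1, le_trans h2.le hx1⟩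
    rw [this, Real.volume_Ico, sub_zero]
  simp only [Gf, hmeas, ENNReal.ofReal_le_iff_le_toReal ht]

noncomputable def gg (T : ℝ) (x : ℝ) : ℝ≥0∞ := if x ≤ T then ENNReal.ofReal x else 0
lemma gg_meas (T : ℝ) : Measurable (gg T) := by
  unfold gg
  exact Measurable.ite measurableSet_Iic ENNReal.measurable_ofReal measurable_const

/-- For every `a ∈ [1/2,1]`, the measure `ν_a` solves the frozen percolation RDE:
if `Y₁, Y₂` are i.i.d. `ν_a` independent of `U ~ Uniform[0,1]`, then
`Φ(Y₁ ∧ Y₂; U)` has law `ν_a`. -/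
theorem stmt_5 (a : ℝ) (ha : a ∈ Set.Icc (1/2 : ℝ) 1) :
    Measure.map (fun p : ℝ≥0∞ × ℝ≥0∞ × ℝ => frozenPhi (min p.1 p.2.1) p.2.2)
        ((nuA a).prod ((nuA a).prod (volume.restrict (Set.Icc (0:ℝ) 1)))) =
      nuA a := by
  obtain ⟨ha1, ha2⟩ := ha
  have ha0 : (0:ℝ) < a := by linarith
  haveI hν : IsProbabilityMeasure (nuA a) := nu_prob ha1
  haveI hl : IsProbabilityMeasure (volume.restrict (Set.Icc (0:ℝ) 1)) := by
    constructor
    simp [Real.volume_Icc]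
  haveI : IsFiniteMeasure (Measure.map (fun p : ℝ≥0∞ × ℝ≥0∞ × ℝ => frozenPhi (min p.1 p.2.1) p.2.2)
      ((nuA a).prod ((nuA a).prod (volume.restrict (Set.Icc (0:ℝ) 1))))) := by
    haveI := Measure.isProbabilityMeasure_map (μ := (nuA a).prod ((nuA a).prod (volume.restrict (Set.Icc (0:ℝ) 1))))
      frozen_meas.aemeasurable
    infer_instance
  refine Measure.ext_of_Iic _ _ (fun t => ?_)
  rw [Measure.map_apply frozen_meas measurableSet_Iic]
  rcases eq_or_ne t ⊤ with rfl | ht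
  · rw [Set.Iic_top, Set.preimage_univ, measure_univ, measure_univ]
  set c := ENNReal.ofReal (1/(2*a)) with hc
  set T := t.toReal with hT
  set I₀ := Set.Ioo (1/2 : ℝ) a with hI₀
  set lam := volume.restrict (Set.Icc (0:ℝ) 1) with hlam
  -- the preimage
  have hpre : (fun p : ℝ≥0∞ × ℝ≥0∞ × ℝ => frozenPhi (min p.1 p.2.1) p.2.2) ⁻¹' Set.Iic t
      = {p : ℝ≥0∞ × ℝ≥0∞ × ℝ | ENNReal.ofReal p.2.2 < min p.1 p.2.1 ∧ min p.1 p.2.1 ≤ t} := by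
    ext p
    simp only [Set.mem_preimage, Set.mem_Iic, Set.mem_setOf_eq, frozenPhi]
    split_ifs with h
    · simp [h]
    · simp [h, top_le_iff, ht]
  rw [hpre]
  have hSmeas : MeasurableSet {p : ℝ≥0∞ × ℝ≥0∞ × ℝ |
      ENNReal.ofReal p.2.2 < min p.1 p.2.1 ∧ min p.1 p.2.1 ≤ t} := by
    have hm : Measurable (fun p : ℝ≥0∞ × ℝ≥0∞ × ℝ => min p.1 p.2.1) :=
      measurable_fst.min (measurable_fst.comp measurable_snd)
    exact (measurableSet_lt (ENNReal.measurable_ofReal.comp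
      (measurable_snd.comp measurable_snd)) hm).inter (hm measurableSet_Iic)
  rw [Measure.prod_apply hSmeas]
  -- inner double integral
  have key : ∀ y₁, ((nuA a).prod lam) (Prod.mk y₁ ⁻¹' {p : ℝ≥0∞ × ℝ≥0∞ × ℝ |
      ENNReal.ofReal p.2.2 < min p.1 p.2.1 ∧ min p.1 p.2.1 ≤ t})
      = ∫⁻ y₂, Gf t (min y₁ y₂) ∂nuA a := by
    intro y₁
    rw [Measure.prod_apply (measurable_prodMk_left hSmeas)]
    refine lintegral_congr (fun y₂ => ?_)
    have hrfl : Prod.mk y₂ ⁻¹' (Prod.mk y₁ ⁻¹' {p : ℝ≥0∞ × ℝ≥0∞ × ℝ |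
        ENNReal.ofReal p.2.2 < min p.1 p.2.1 ∧ min p.1 p.2.1 ≤ t})
        = {u : ℝ | ENNReal.ofReal u < min y₁ y₂ ∧ min y₁ y₂ ≤ t} := rfl
    rw [hrfl, Gf]
    split_ifs with h
    · congr 1
      ext u
      simp [h]
    · have he : {u : ℝ | ENNReal.ofReal u < min y₁ y₂ ∧ min y₁ y₂ ≤ t} = ∅ := by
        ext u; simp [h]
      rw [he]
      exact measure_empty
  rw [lintegral_congr key]
  -- expand outer ν-integral
  have houter : Measurable (fun y₁ => ∫⁻ y₂, Gf t (min y₁ y₂) ∂nuA a) := by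
    apply Measurable.lintegral_prod_right
    exact (Gf_meas t).comp (measurable_fst.min measurable_snd)
  rw [lint_nu a houter]
  have hmono : Monotone ENNReal.ofReal := fun _ _ h => ENNReal.ofReal_le_ofReal h
  -- the ⊤ term
  have etop : ∫⁻ y₂, Gf t (min ⊤ y₂) ∂nuA a = ∫⁻ x in I₀, w x * gg T x := by
    have h0 : ∀ y₂, Gf t (min ⊤ y₂) = Gf t y₂ := fun y₂ => by rw [min_eq_right le_top]
    rw [lintegral_congr h0, lint_nu a (Gf_meas t), Gf_top ht, mul_zero, add_zero]
    refine setLIntegral_congr_fun measurableSet_Ioo (fun x hx => ?_)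
    beta_reduce
    rw [Gf_ofReal ht (by linarith [hx.1]) (by linarith [hx.2])]
    rfl
  rw [etop]
  -- the inner ν-integral for finite first coordinate
  have einner : ∀ x ∈ I₀, ∫⁻ y₂, Gf t (min (ENNReal.ofReal x) y₂) ∂nuA a
      = (∫⁻ y in I₀, w y * gg T (min x y)) + c * gg T x := by
    intro x hx
    have hx0 : (0:ℝ) < x := by linarith [hx.1]
    have hx1 : x ≤ 1 := by linarith [hx.2]
    rw [lint_nu a (show Measurable fun y₂ => Gf t (min (ENNReal.ofReal x) y₂) from
      (Gf_meas t).comp (measurable_const.min measurable_id))]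
    congr 1
    · refine setLIntegral_congr_fun measurableSet_Ioo (fun y hy => ?_)
      beta_reduce
      have hy0 : (0:ℝ) < y := by linarith [hy.1]
      have hy1 : y ≤ 1 := by linarith [hy.2]
      have hmin : min (ENNReal.ofReal x) (ENNReal.ofReal y) = ENNReal.ofReal (min x y) :=
        (hmono.map_min).symm
      rw [hmin, Gf_ofReal ht (lt_min hx0 hy0) (min_le_of_left_le hx1)]
      rfl
    · rw [min_eq_left le_top, Gf_ofReal ht hx0 hx1]
      rfl
  rw [setLIntegral_congr_fun measurableSet_Ioo
    (fun x hx => by beta_reduce; rw [einner x hx])]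
  -- rewrite the RHS
  have hrhs : nuA a (Set.Iic t) = ∫⁻ x in I₀, w x * (if x ≤ T then 1 else 0) := by
    rw [← lintegral_indicator_one measurableSet_Iic,
      lint_nu a (measurable_one.indicator measurableSet_Iic)]
    have h1 : (Set.Iic t).indicator (1 : ℝ≥0∞ → ℝ≥0∞) ⊤ = 0 := by
      simp [Set.indicator_apply, ht, top_le_iff]
    rw [h1, mul_zero, add_zero]
    refine setLIntegral_congr_fun measurableSet_Ioo (fun x hx => ?_)
    congr 1
    simp [Set.indicator_apply, Set.mem_Iic, ENNReal.ofReal_le_iff_le_toReal ht, hT]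
  rw [hrhs]
  have hwne : ∀ x : ℝ, w x ≠ ⊤ := fun x => ENNReal.ofReal_ne_top
  have hggne : ∀ x : ℝ, gg T x ≠ ⊤ := fun x => by
    unfold gg; split_ifs <;> simp
  have hphine : ∀ x : ℝ, w x * gg T x ≠ ⊤ := fun x => ENNReal.mul_ne_top (hwne x) (hggne x)
  have hcne : c ≠ ⊤ := ENNReal.ofReal_ne_top
  -- step 1: distribute the product over the sum
  have step1 : ∫⁻ x in I₀, w x * ((∫⁻ y in I₀, w y * gg T (min x y)) + c * gg T x)
      = (∫⁻ x in I₀, w x * ∫⁻ y in I₀, w y * gg T (min x y))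
        + ∫⁻ x in I₀, w x * (c * gg T x) := by
    rw [← lintegral_add_right _ (show Measurable fun x => w x * (c * gg T x) from w_meas.mul (measurable_const.mul (gg_meas T)))]
    exact lintegral_congr fun x => mul_add _ _ _
  rw [step1]
  -- split the min into two indicator pieces
  have hsplit : ∀ x : ℝ, w x * ∫⁻ y in I₀, w y * gg T (min x y)
      = ∫⁻ y in I₀, ((if y ≤ x then (w y * gg T y) * w x else 0)
          + (if y ≤ x then 0 else (w x * gg T x) * w y)) := by
    intro x
    rw [← lintegral_const_mul' (w x) _ (hwne x)]
    refine lintegral_congr fun y => ?_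
    by_cases h : y ≤ x
    · rw [min_eq_right h, if_pos h, if_pos h, add_zero]
      ring
    · rw [min_eq_left (not_le.mp h).le, if_neg h, if_neg h, zero_add]
      ring
  rw [setLIntegral_congr_fun measurableSet_Ioo (fun x _ => hsplit x)]
  have hmeas1 : ∀ x : ℝ, Measurable fun y => (if y ≤ x then (w y * gg T y) * w x else 0) :=
    fun x => Measurable.ite measurableSet_Iic ((w_meas.mul (gg_meas T)).mul_const _)
      measurable_const
  have hmeasD1 : Measurable fun x => ∫⁻ y in I₀, (if y ≤ x then (w y * gg T y) * w x else 0) := by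
    apply Measurable.lintegral_prod_right
    exact Measurable.ite (measurableSet_le measurable_snd measurable_fst)
      (((w_meas.comp measurable_snd).mul ((gg_meas T).comp measurable_snd)).mul
        (w_meas.comp measurable_fst)) measurable_const
  have step2 : ∫⁻ x in I₀, ∫⁻ y in I₀, ((if y ≤ x then (w y * gg T y) * w x else 0)
          + (if y ≤ x then 0 else (w x * gg T x) * w y))
      = (∫⁻ x in I₀, ∫⁻ y in I₀, (if y ≤ x then (w y * gg T y) * w x else 0))
        + ∫⁻ x in I₀, ∫⁻ y in I₀, (if y ≤ x then 0 else (w x * gg T x) * w y) := by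
    rw [← lintegral_add_left hmeasD1]
    refine lintegral_congr fun x => ?_
    rw [lintegral_add_left (hmeas1 x)]
  rw [step2]
  -- evaluate the second piece
  have hD2 : ∫⁻ x in I₀, ∫⁻ y in I₀, (if y ≤ x then 0 else (w x * gg T x) * w y)
      = ∫⁻ x in I₀, (w x * gg T x) * ENNReal.ofReal (1/(2*x) - 1/(2*a)) := by
    refine setLIntegral_congr_fun measurableSet_Ioo (fun x hx => ?_)
    beta_reduce
    have h1 : ∀ y : ℝ, (if y ≤ x then 0 else (w x * gg T x) * w y)
        = (Set.Ioi x).indicator (fun y => (w x * gg T x) * w y) y := by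
      intro y
      rw [Set.indicator_apply]
      by_cases h : y ≤ x
      · rw [if_pos h, if_neg (by simpa using not_lt.mpr h)]
      · rw [if_neg h, if_pos (by simpa using not_le.mp h)]
    rw [lintegral_congr h1, lintegral_indicator measurableSet_Ioi,
      Measure.restrict_restrict measurableSet_Ioi]
    have h2 : Set.Ioi x ∩ I₀ = Set.Ioo x a := by
      ext y
      constructor
      · rintro ⟨h3, _, h5⟩; exact ⟨h3, h5⟩
      · rintro ⟨h3, h4⟩; exact ⟨h3, lt_trans hx.1 h3, h4⟩
    rw [h2, lintegral_const_mul' _ _ (hphine x), lint_Ioo (by linarith [hx.1]) hx.2.le]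
  -- evaluate the first piece, via Tonelli
  have hun : AEMeasurable (Function.uncurry fun x y : ℝ =>
      (if y ≤ x then (w y * gg T y) * w x else 0))
      ((volume.restrict I₀).prod (volume.restrict I₀)) := by
    apply Measurable.aemeasurable
    exact Measurable.ite (measurableSet_le measurable_snd measurable_fst)
      (((w_meas.comp measurable_snd).mul ((gg_meas T).comp measurable_snd)).mul
        (w_meas.comp measurable_fst)) measurable_const
  have hD1 : ∫⁻ x in I₀, ∫⁻ y in I₀, (if y ≤ x then (w y * gg T y) * w x else 0)
      = ∫⁻ x in I₀, (w x * gg T x) * ENNReal.ofReal (1/(2*x) - 1/(2*a)) := by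
    rw [lintegral_lintegral_swap hun]
    refine setLIntegral_congr_fun measurableSet_Ioo (fun y hy => ?_)
    beta_reduce
    have h1 : ∀ x : ℝ, (if y ≤ x then (w y * gg T y) * w x else 0)
        = (Set.Ici y).indicator (fun x => (w y * gg T y) * w x) x := by
      intro x
      rw [Set.indicator_apply]
      by_cases h : y ≤ x
      · rw [if_pos h, if_pos (by simpa using h)]
      · rw [if_neg h, if_neg (by simpa using h)]
    rw [lintegral_congr h1, lintegral_indicator measurableSet_Ici,
      Measure.restrict_restrict measurableSet_Ici]
    have h2 : Set.Ici y ∩ I₀ = Set.Ico y a := by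
      ext x
      constructor
      · rintro ⟨h3, _, h5⟩; exact ⟨h3, h5⟩
      · rintro ⟨h3, h4⟩; exact ⟨h3, lt_of_lt_of_le hy.1 h3, h4⟩
    rw [h2, lintegral_const_mul' _ _ (hphine y),
      setLIntegral_congr (Ioo_ae_eq_Ico (μ := volume) (a := y) (b := a)).symm,
      lint_Ioo (by linarith [hy.1]) hy.2.le]
  rw [hD1, hD2]
  have hcP3 : c * ∫⁻ x in I₀, w x * gg T x = ∫⁻ x in I₀, c * (w x * gg T x) :=
    (lintegral_const_mul' c _ hcne).symm
  rw [hcP3]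
  -- combine all four integrals into one
  have hq : Measurable fun x => (w x * gg T x) * ENNReal.ofReal (1/(2*x) - 1/(2*a)) := by
    apply (w_meas.mul (gg_meas T)).mul
    apply ENNReal.measurable_ofReal.comp
    fun_prop
  have hp2 : Measurable fun x => w x * (c * gg T x) :=
    w_meas.mul (measurable_const.mul (gg_meas T))
  rw [← lintegral_add_left hq, ← lintegral_add_left (show Measurable fun x => (w x * gg T x) * ENNReal.ofReal (1/(2*x) - 1/(2*a)) + (w x * gg T x) * ENNReal.ofReal (1/(2*x) - 1/(2*a)) from hq.add hq),
    ← lintegral_add_left (show Measurable fun x => (w x * gg T x) * ENNReal.ofReal (1/(2*x) - 1/(2*a)) + (w x * gg T x) * ENNReal.ofReal (1/(2*x) - 1/(2*a)) + w x * (c * gg T x) from (hq.add hq).add hp2)]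
  -- the final pointwise identity
  refine setLIntegral_congr_fun measurableSet_Ioo (fun x hx => ?_)
  beta_reduce
  have hx0 : (0:ℝ) < x := by linarith [hx.1]
  have hxa : x < a := hx.2
  by_cases hxT : x ≤ T
  · have hE : (0:ℝ) ≤ 1/(2*x) - 1/(2*a) := by
      rw [sub_nonneg]
      exact one_div_le_one_div_of_le (by positivity) (by linarith)
    have hA : (0:ℝ) ≤ 1/(2*x^2) * x * (1/(2*x) - 1/(2*a)) := mul_nonneg (by positivity) hE
    rw [if_pos hxT, hc]
    simp only [gg, if_pos hxT, w, mul_one]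
    have e1 : (ENNReal.ofReal (1/(2*x^2)) * ENNReal.ofReal x) * ENNReal.ofReal (1/(2*x) - 1/(2*a))
        = ENNReal.ofReal (1/(2*x^2) * x * (1/(2*x) - 1/(2*a))) := by
      rw [ENNReal.ofReal_mul (p := 1/(2*x^2) * x) (by positivity),
        ENNReal.ofReal_mul (p := 1/(2*x^2)) (by positivity)]
    have e3 : ENNReal.ofReal (1/(2*x^2)) * (ENNReal.ofReal (1/(2*a)) * ENNReal.ofReal x)
        = ENNReal.ofReal (1/(2*x^2) * (1/(2*a) * x)) := by
      rw [ENNReal.ofReal_mul (p := 1/(2*x^2)) (by positivity),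
        ENNReal.ofReal_mul (p := 1/(2*a)) (by positivity)]
    have e4 : ENNReal.ofReal (1/(2*a)) * (ENNReal.ofReal (1/(2*x^2)) * ENNReal.ofReal x)
        = ENNReal.ofReal (1/(2*a) * (1/(2*x^2) * x)) := by
      rw [ENNReal.ofReal_mul (p := 1/(2*a)) (by positivity),
        ENNReal.ofReal_mul (p := 1/(2*x^2)) (by positivity)]
    rw [e1, e3, e4, ← ENNReal.ofReal_add hA hA,
      ← ENNReal.ofReal_add (by linarith) (by positivity),
      ← ENNReal.ofReal_add (by positivity) (by positivity)]
    congr 1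
    field_simp
    ring
  · rw [if_neg hxT]
    simp [gg, hxT]
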